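/- Let m, n be positive integers and A an m×n real matrix. If A is not very well approximable, then for every ε > 0 there exists c > 0 such that for all sufficiently large Q and all γ ∈ ℝ^m, there exist q ∈ ℤ^n with ‖q‖ < Q and p ∈ ℤ^m satisfying ‖Aq − p − γ‖ < c·Q^{−(n/m − ε)}. -/

import Mathlib

open MeasureTheory Module Submodule Set
open scoped ENNReal


theorem lattice_covering {ι : Type*} [Fintype ι] [DecidableEq ι] [Nonempty ι]
    (b : Basis ι ℝ (ι → ℝ)) (hvol : volume (ZSpan.fundamentalDomain b) = 1)
    {η : ℝ} (hη : 0 < η)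
    (hmin : ∀ v ∈ Submodule.span ℤ (Set.range ⇑b), v ≠ 0 → η ≤ ‖v‖) (y : ι → ℝ) :
    ∃ v ∈ Submodule.span ℤ (Set.range ⇑b),
      ‖y - v‖ ≤ (Fintype.card ι : ℝ) *
        (((Fintype.card ι : ℝ) / η) ^ (Fintype.card ι - 1) + 1 + η) := by
  classical
  set k := Fintype.card ι with hkdef
  have hk0 : 0 < k := Fintype.card_pos
  have hkR : (1 : ℝ) ≤ (k : ℝ) := by exact_mod_cast hk0
  set β : ℝ := η / k with hβdef
  have hβ0 : 0 < β := div_pos hη (by positivity)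
  have hβη : β ≤ η := div_le_self hη.le hkR
  set a : ℝ := β⁻¹ ^ (k - 1) + 1 with hadef
  have ha0 : 0 < a := by positivity
  set R : ℝ := a + η with hRdef
  have hRa : ((k : ℝ) / η) ^ (k - 1) + 1 + η = R := by
    rw [hRdef, hadef, hβdef, inv_div]
  have hR0 : 0 < R := by positivity
  -- Step 1: short lattice vectors span
  have hspan : Submodule.span ℝ
      {v : ι → ℝ | v ∈ Submodule.span ℤ (Set.range ⇑b) ∧ ‖v‖ ≤ R} = ⊤ := by
    by_contra hne
    obtain ⟨φ, hφ0, hφker⟩ :=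
      Submodule.exists_le_ker_of_lt_top _ (lt_top_iff_ne_top.mpr hne)
    set e : ι → ι → ℝ := fun i j => if i = j then 1 else 0 with he
    have hφsum : ∀ x : ι → ℝ, φ x = ∑ j, x j * φ (e j) := by
      intro x
      have hx : x = ∑ j, x j • e j := by
        funext j'
        simp [he, Finset.sum_apply, mul_ite]
      calc φ x = φ (∑ j, x j • e j) := by rw [← hx]
        _ = ∑ j, x j * φ (e j) := by
            rw [map_sum]
            exact Finset.sum_congr rfl fun j _ => by rw [LinearMap.map_smul, smul_eq_mul]
    obtain ⟨i0, -, hi0⟩ := Finset.exists_max_image Finset.univ (fun j => |φ (e j)|)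
      ⟨Classical.arbitrary ι, Finset.mem_univ _⟩
    have hD : φ (e i0) ≠ 0 := by
      intro h0
      apply hφ0
      apply LinearMap.ext; intro x
      rw [hφsum x]
      have hall : ∀ j, φ (e j) = 0 := fun j =>
        abs_eq_zero.mp (le_antisymm (by simpa [h0] using hi0 j (Finset.mem_univ j))
          (abs_nonneg _))
      simp [hall]
    set D := φ (e i0) with hDdef
    set w : ι → ℝ := fun j => φ (e j) / D with hwdef
    have hwi0 : w i0 = 1 := div_self hD
    have hwle : ∀ j, |w j| ≤ 1 := fun j => by
      rw [hwdef]
      rw [abs_div]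
      exact div_le_one_of_le₀ (hi0 j (Finset.mem_univ j)) (abs_nonneg _)
    set N : Matrix ι ι ℝ := (1 : Matrix ι ι ℝ).updateRow i0 w with hNdef
    have hNdet : N.det = 1 := by
      have hw' : w = ∑ i, w i • (1 : Matrix ι ι ℝ) i := by
        funext j
        simp [Matrix.one_apply, Finset.sum_apply, mul_ite, Finset.sum_ite_eq]
      rw [hNdef]
      conv_lhs => rw [hw']
      rw [Matrix.det_updateRow_sum, hwi0, Matrix.det_one, smul_eq_mul, mul_one]
    haveI : Invertible N := N.invertibleOfIsUnitDet (by rw [hNdet]; exact isUnit_one)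
    set T := N.toLinearEquiv' ‹Invertible N› with hTdef
    have hTapp : ∀ z, T z = N.mulVec z := fun z => rfl
    set r : ι → ℝ := fun j => if j = i0 then a else β with hrdef
    have hrpos : ∀ j, 0 < r j := fun j => by
      rw [hrdef]; dsimp only; split
      · exact ha0
      · exact hβ0
    set Bx : Set (ι → ℝ) := Set.Icc (fun j => -(r j)) r with hBxdef
    set C : Set (ι → ℝ) := ⇑T ⁻¹' Bx with hCdef
    have hdetT : LinearMap.det (T : (ι → ℝ) →ₗ[ℝ] (ι → ℝ)) = 1 := by
      have : (T : (ι → ℝ) →ₗ[ℝ] (ι → ℝ)) = Matrix.toLin' N := rfl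
      rw [this, LinearMap.det_toLin', hNdet]
    have hdetTsymm : LinearMap.det (T.symm : (ι → ℝ) →ₗ[ℝ] (ι → ℝ)) = 1 := by
      have hcomp : (T.symm : (ι → ℝ) →ₗ[ℝ] (ι → ℝ)) ∘ₗ (T : (ι → ℝ) →ₗ[ℝ] (ι → ℝ))
          = LinearMap.id := by
        apply LinearMap.ext; intro z; simp
      have h2 := congrArg LinearMap.det hcomp
      rwa [LinearMap.det_comp, hdetT, mul_one, LinearMap.det_id] at h2
    have hvolC : volume C = volume Bx := by
      rw [hCdef, MeasureTheory.Measure.addHaar_preimage_linearEquiv, hdetTsymm]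
      simp
    have hvolBx : volume Bx = ENNReal.ofReal ((2*a) * (2*β) ^ (k - 1)) := by
      rw [hBxdef, Real.volume_Icc_pi]
      have hterm : ∀ j, ENNReal.ofReal (r j - -(r j)) = ENNReal.ofReal (2 * r j) := by
        intro j; congr 1; ring
      rw [Finset.prod_congr rfl (fun j _ => hterm j)]
      rw [← Finset.mul_prod_erase Finset.univ _ (Finset.mem_univ i0)]
      have h1 : 2 * r i0 = 2 * a := by rw [hrdef]; simp
      have h2 : ∀ j ∈ Finset.univ.erase i0,
          ENNReal.ofReal (2 * r j) = ENNReal.ofReal (2 * β) := by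
        intro j hj
        rw [hrdef]; simp only
        rw [if_neg (Finset.ne_of_mem_erase hj)]
      rw [h1, Finset.prod_congr rfl h2, Finset.prod_const,
        Finset.card_erase_of_mem (Finset.mem_univ _), Finset.card_univ,
        ← ENNReal.ofReal_pow (by positivity), ← ENNReal.ofReal_mul (by positivity)]
    have hlt : volume (ZSpan.fundamentalDomain b) * 2 ^ (finrank ℝ (ι → ℝ)) < volume C := by
      rw [hvol, one_mul, hvolC, hvolBx, Module.finrank_fintype_fun_eq_card]
      have h2 : (2 : ℝ≥0∞) ^ k = ENNReal.ofReal (2 ^ k) := by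
        rw [ENNReal.ofReal_pow (by norm_num : (0:ℝ) ≤ 2)]
        norm_num
      rw [← hkdef, h2, ENNReal.ofReal_lt_ofReal_iff (by positivity)]
      obtain ⟨K, hK⟩ : ∃ K, k = K + 1 := ⟨k - 1, (Nat.succ_pred_eq_of_pos hk0).symm⟩
      have hK' : k - 1 = K := by omega
      rw [hK', hK]
      have expand : 2 * a * (2*β) ^ K = 2 ^ (K+1) * (β⁻¹ ^ K * β ^ K) + 2 ^ (K+1) * β ^ K := by
        rw [hadef, hK', mul_pow]; ring
      have hbb : β⁻¹ ^ K * β ^ K = 1 := by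
        rw [← mul_pow, inv_mul_cancel₀ (ne_of_gt hβ0), one_pow]
      rw [expand, hbb, mul_one]
      have hpos : 0 < 2 ^ (K+1) * β ^ K := by positivity
      linarith
    have fund := ZSpan.isAddFundamentalDomain' b volume
    haveI : Countable (Submodule.span ℤ (Set.range ⇑b)).toAddSubgroup := by
      change Countable (Submodule.span ℤ (Set.range ⇑b)); infer_instance
    have hconv : Convex ℝ C := by
      have hBc : Convex ℝ Bx := by rw [hBxdef]; exact convex_Icc _ _
      have := hBc.linear_preimage (T : (ι → ℝ) →ₗ[ℝ] (ι → ℝ))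
      simpa [hCdef] using this
    have hsymm : ∀ x ∈ C, -x ∈ C := by
      intro x hx
      rw [hCdef, Set.mem_preimage, Set.mem_Icc] at hx ⊢
      rw [map_neg]
      obtain ⟨h1, h2⟩ := hx
      constructor
      · intro j
        have := h2 j
        simp only [Pi.neg_apply]
        linarith
      · intro j
        have := h1 j
        simp only [Pi.neg_apply, Pi.le_def] at this ⊢
        linarith [h1 j]
    obtain ⟨x, hx0, hxC⟩ :=
      MeasureTheory.exists_ne_zero_mem_lattice_of_measure_mul_two_pow_lt_measure
        fund hsymm hconv hlt
    set xe : ι → ℝ := (x : ι → ℝ) with hxedef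
    have hxmem : xe ∈ Submodule.span ℤ (Set.range ⇑b) := x.2
    have hxne : xe ≠ 0 := fun h => hx0 (Subtype.ext h)
    rw [hCdef, Set.mem_preimage, Set.mem_Icc] at hxC
    have hTx : ∀ j, |(T xe) j| ≤ r j := fun j =>
      abs_le.mpr ⟨by simpa using hxC.1 j, hxC.2 j⟩
    have hTcoord : ∀ (z : ι → ℝ) (j : ι), (T z) j = ∑ l, N j l * z l := by
      intro z j
      rw [hTapp]
      rfl
    have hTne : ∀ (z : ι → ℝ), ∀ j ≠ i0, (T z) j = z j := by
      intro z j hj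
      rw [hTcoord]
      simp [hNdef, Matrix.updateRow_ne hj, Matrix.one_apply, mul_ite, Finset.sum_ite_eq]
    have hTi0 : ∀ (z : ι → ℝ), (T z) i0 = ∑ l, w l * z l := by
      intro z
      rw [hTcoord]
      simp [hNdef, Matrix.updateRow_self]
    have hxj : ∀ j, j ≠ i0 → |xe j| ≤ β := by
      intro j hj
      have h := hTx j
      rw [hTne xe j hj] at h
      simp only [hrdef] at h
      rwa [if_neg hj] at h
    have hkβ : (k : ℝ) * β = η := by
      rw [hβdef]; field_simp
    have hsum_small : |∑ l ∈ Finset.univ.erase i0, w l * xe l| ≤ η - β := by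
      calc |∑ l ∈ Finset.univ.erase i0, w l * xe l|
          ≤ ∑ l ∈ Finset.univ.erase i0, |w l * xe l| :=
            Finset.abs_sum_le_sum_abs _ _
        _ ≤ ∑ _l ∈ Finset.univ.erase i0, β := by
            refine Finset.sum_le_sum fun l hl => ?_
            rw [abs_mul]
            calc |w l| * |xe l| ≤ 1 * β := by
                  refine mul_le_mul (hwle l) (hxj l (Finset.ne_of_mem_erase hl))
                    (abs_nonneg _) (by norm_num)
              _ = β := one_mul β
        _ = ((k - 1 : ℕ) : ℝ) * β := by
            rw [Finset.sum_const, Finset.card_erase_of_mem (Finset.mem_univ _),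
              Finset.card_univ, nsmul_eq_mul, hkdef]
        _ ≤ η - β := by
            rw [Nat.cast_pred hk0]
            have : ((k : ℝ) - 1) * β = (k : ℝ) * β - β := by ring
            rw [this, hkβ]
    have hxi0 : xe i0 = (T xe) i0 - ∑ l ∈ Finset.univ.erase i0, w l * xe l := by
      rw [hTi0, ← Finset.add_sum_erase _ _ (Finset.mem_univ i0), hwi0, one_mul]
      ring
    have hnormle : ‖xe‖ ≤ R := by
      refine (pi_norm_le_iff_of_nonneg hR0.le).mpr fun j => ?_
      rw [Real.norm_eq_abs]
      by_cases hj : j = i0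
      · subst hj
        rw [hxi0]
        have h1 := hTx j
        simp only [hrdef, if_pos] at h1
        calc |(T xe) j - ∑ l ∈ Finset.univ.erase j, w l * xe l|
            ≤ |(T xe) j| + |∑ l ∈ Finset.univ.erase j, w l * xe l| := by
              have h := abs_add_le ((T xe) j) (-(∑ l ∈ Finset.univ.erase j, w l * xe l))
              rw [abs_neg] at h
              simpa [sub_eq_add_neg] using h
          _ ≤ a + (η - β) := add_le_add h1 hsum_small
          _ ≤ R := by rw [hRdef]; linarith
      · calc |xe j| ≤ β := hxj j hj
          _ ≤ R := by rw [hRdef]; linarith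
    have hker : φ xe = 0 := hφker (Submodule.subset_span ⟨hxmem, hnormle⟩)
    have hTXi0 : (T xe) i0 = 0 := by
      rw [hTi0]
      have hstep : ∑ l, w l * xe l = (∑ l, xe l * φ (e l)) / D := by
        rw [Finset.sum_div]
        exact Finset.sum_congr rfl fun l _ => by rw [hwdef]; ring
      rw [hstep, ← hφsum, hker, zero_div]
    have hlt' : ‖xe‖ < η := by
      rw [pi_norm_lt_iff hη]
      intro j
      rw [Real.norm_eq_abs]
      by_cases hj : j = i0
      · subst hj
        rw [hxi0, hTXi0, zero_sub, abs_neg]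
        calc |∑ l ∈ Finset.univ.erase j, w l * xe l| ≤ η - β := hsum_small
          _ < η := by linarith
      · have hk2 : (1 : ℝ) < (k : ℝ) := by
          have : 1 < k := Fintype.one_lt_card_iff_nontrivial.mpr ⟨⟨j, i0, hj⟩⟩
          exact_mod_cast this
        calc |xe j| ≤ β := hxj j hj
          _ < η := by rw [hβdef]; exact div_lt_self hη hk2
    exact absurd (hmin xe hxmem hxne) (not_le.mpr hlt')
  -- Step 2: basis from short vectors, rounding
  obtain ⟨s, hsub, hspan2, hind⟩ := exists_linearIndependent ℝ
    {v : ι → ℝ | v ∈ Submodule.span ℤ (Set.range ⇑b) ∧ ‖v‖ ≤ R}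
  rw [hspan] at hspan2
  have hfin : s.Finite := hind.setFinite
  haveI := hfin.fintype
  set Bs : Basis s ℝ (ι → ℝ) := Basis.mk hind (by rw [Subtype.range_coe]; exact hspan2.ge)
    with hBsdef
  have hBsapp : ∀ i : s, Bs i = (i : ι → ℝ) := fun i => by rw [hBsdef, Basis.mk_apply]
  have hcards : Fintype.card s = k := by
    rw [← Module.finrank_eq_card_basis Bs, Module.finrank_fintype_fun_eq_card]
  set c := Bs.repr y with hcdef
  refine ⟨∑ i : s, (round (c i) : ℝ) • (i : ι → ℝ), ?_, ?_⟩
  · have hrw : ∀ i : s, (round (c i) : ℝ) • (i : ι → ℝ) = (round (c i) : ℤ) • (i : ι → ℝ) := by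
      intro i
      rw [Int.cast_smul_eq_zsmul]
    rw [Finset.sum_congr rfl fun i _ => hrw i]
    exact Submodule.sum_mem _ fun i _ => Submodule.smul_mem _ _ (hsub i.2).1
  · have hy := Bs.sum_repr y
    have hyv : y - (∑ i : s, (round (c i) : ℝ) • (i : ι → ℝ))
        = ∑ i : s, (c i - (round (c i) : ℝ)) • (i : ι → ℝ) := by
      conv_lhs => rw [← hy]
      rw [← Finset.sum_sub_distrib]
      refine Finset.sum_congr rfl fun i _ => ?_
      rw [hBsapp i, sub_smul, hcdef]
    rw [hRa, hyv]
    calc ‖∑ i : s, (c i - (round (c i) : ℝ)) • (i : ι → ℝ)‖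
        ≤ ∑ i : s, ‖(c i - (round (c i) : ℝ)) • (i : ι → ℝ)‖ := norm_sum_le _ _
      _ ≤ ∑ _i : s, (1/2) * R := by
          refine Finset.sum_le_sum fun i _ => ?_
          rw [norm_smul, Real.norm_eq_abs]
          exact mul_le_mul (abs_sub_round _) (hsub i.2).2 (norm_nonneg _) (by norm_num)
      _ = (Fintype.card s : ℝ) * ((1/2) * R) := by
          rw [Finset.sum_const, Finset.card_univ, nsmul_eq_mul]
      _ ≤ (k : ℝ) * R := by
          rw [hcards]
          nlinarith [hR0.le, hkR]



theorem dani_step (m n : ℕ) (hm : 0 < m) (hn : 0 < n) (A : Matrix (Fin m) (Fin n) ℝ)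
    (hA : ¬ ∃ σ : ℝ, σ > (n : ℝ) / m ∧
      {pq : (Fin m → ℤ) × (Fin n → ℤ) |
        ‖A.mulVec (fun i => (pq.2 i : ℝ)) + (fun i => (pq.1 i : ℝ))‖ ≤
          ‖(fun i => (pq.2 i : ℝ))‖ ^ (-σ)}.Infinite)
    {δ : ℝ} (hδ : 0 < δ) (hδn : δ < 1 / n) :
    ∃ t₀ : ℝ, 0 ≤ t₀ ∧ ∀ t ≥ t₀, ∀ p : Fin m → ℤ, ∀ q : Fin n → ℤ, ¬(p = 0 ∧ q = 0) →
      ¬(‖A.mulVec (fun i => (q i : ℝ)) + (fun i => (p i : ℝ))‖ <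
          Real.exp (-δ * t) * Real.exp (-(t / m)) ∧
        ‖(fun i => (q i : ℝ))‖ < Real.exp (-δ * t) * Real.exp (t / n)) := by
  have hm' : (0:ℝ) < m := by exact_mod_cast hm
  have hn' : (0:ℝ) < n := by exact_mod_cast hn
  by_contra hcon
  push_neg at hcon
  have hchoose : ∀ j : ℕ, ∃ t, (j:ℝ) ≤ t ∧ ∃ pp : Fin m → ℤ, ∃ qq : Fin n → ℤ,
      ¬(pp = 0 ∧ qq = 0) ∧
      (‖A.mulVec (fun i => (qq i : ℝ)) + (fun i => (pp i : ℝ))‖ <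
          Real.exp (-δ * t) * Real.exp (-(t / m)) ∧
        ‖(fun i => (qq i : ℝ))‖ < Real.exp (-δ * t) * Real.exp (t / n)) := by
    intro j
    obtain ⟨t, ht, pp, qq, hne, hball⟩ := hcon (j:ℝ) (Nat.cast_nonneg j)
    exact ⟨t, ht, pp, qq, fun hand => (hne hand.1) hand.2, hball⟩
  choose t ht p q hne hball using hchoose
  have ht0 : ∀ j, 0 ≤ t j := fun j => le_trans (Nat.cast_nonneg j) (ht j)
  have hmain : ∀ j, ‖A.mulVec (fun i => (q j i : ℝ)) + (fun i => (p j i : ℝ))‖ <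
      Real.exp (-(δ + 1/m) * t j) := by
    intro j
    have h := (hball j).1
    rwa [← Real.exp_add, show -δ * t j + -(t j / m) = -(δ + 1/m) * t j by ring] at h
  have hqlt : ∀ j, ‖(fun i => (q j i : ℝ))‖ < Real.exp ((1/n - δ) * t j) := by
    intro j
    have h := (hball j).2
    rwa [← Real.exp_add, show -δ * t j + t j / n = (1/n - δ) * t j by ring] at h
  have hq0 : ∀ j, q j ≠ 0 := by
    intro j hq
    have hcast : (fun i => ((q j) i : ℝ)) = 0 := by
      funext i; rw [hq]; simp
    have h1 := hmain j
    rw [hcast, Matrix.mulVec_zero, zero_add] at h1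
    have hle1 : Real.exp (-(δ + 1/m) * t j) ≤ 1 := by
      rw [Real.exp_le_one_iff]
      have := ht0 j
      nlinarith [hδ.le, (by positivity : (0:ℝ) ≤ 1/(m:ℝ))]
    have hploc : ∀ i, p j i = 0 := by
      intro i
      have h2 : |((p j i : ℝ))| < 1 := by
        have := norm_le_pi_norm (fun i => ((p j) i : ℝ)) i
        rw [Real.norm_eq_abs] at this
        linarith
      have : |p j i| < 1 := by exact_mod_cast h2
      exact Int.abs_lt_one_iff.mp this
    exact hne j ⟨funext hploc, hq⟩
  have hq1 : ∀ j, (1:ℝ) ≤ ‖(fun i => (q j i : ℝ))‖ := by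
    intro j
    obtain ⟨i, hi⟩ := Function.ne_iff.mp (hq0 j)
    calc (1:ℝ) ≤ |((q j i : ℝ))| := by
          have : 1 ≤ |q j i| := Int.one_le_abs (by simpa using hi)
          exact_mod_cast this
      _ ≤ ‖(fun i => (q j i : ℝ))‖ := by
          have := norm_le_pi_norm (fun i => ((q j) i : ℝ)) i
          rwa [Real.norm_eq_abs] at this
  by_cases hfin : (Set.range (fun j => (p j, q j))).Finite
  · -- some pair repeats infinitely often
    have hexv : ∃ v ∈ Set.range (fun j => (p j, q j)), {j : ℕ | (p j, q j) = v}.Infinite := by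
      by_contra hno
      push_neg at hno
      have huniv : (Set.univ : Set ℕ) ⊆
          ⋃ v ∈ Set.range (fun j => (p j, q j)), {j | (p j, q j) = v} := by
        intro j _
        exact Set.mem_biUnion (Set.mem_range_self j) rfl
      have : (Set.univ : Set ℕ).Finite :=
        ((hfin.biUnion (fun v hv => hno v hv))).subset huniv
      exact Set.infinite_univ this
    obtain ⟨v, hvmem, hvinf⟩ := hexv
    obtain ⟨j₀, hj₀⟩ := hvmem
    have hq₀ : v.2 ≠ 0 := by
      rw [← hj₀]
      exact hq0 j₀
    set N₀ := ‖A.mulVec (fun i => (v.2 i : ℝ)) + (fun i => (v.1 i : ℝ))‖ with hN₀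
    have hN0 : N₀ = 0 := by
      by_contra hN
      have hNpos : 0 < N₀ := lt_of_le_of_ne (norm_nonneg _) (Ne.symm hN)
      have hc : 0 < δ + 1/m := by positivity
      obtain ⟨j, hjmem, hjgt⟩ := hvinf.exists_gt ⌈(-Real.log N₀) / (δ + 1/m)⌉₊
      have hjv : (p j, q j) = v := hjmem
      have hpj : p j = v.1 := by rw [← hjv]
      have hqj : q j = v.2 := by rw [← hjv]
      have h1 := hmain j
      rw [hpj, hqj] at h1
      have h2 : Real.exp (-(δ + 1/m) * t j) ≤ N₀ := by
        rw [← Real.exp_log hNpos]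
        apply Real.exp_le_exp.mpr
        have hjge : (-Real.log N₀) / (δ + 1/m) ≤ (j:ℝ) := by
          calc (-Real.log N₀) / (δ + 1/m) ≤ (⌈(-Real.log N₀) / (δ + 1/m)⌉₊ : ℝ) :=
                Nat.le_ceil _
            _ ≤ (j:ℝ) := by exact_mod_cast hjgt.le
        have htj : (-Real.log N₀) / (δ + 1/m) ≤ t j := le_trans hjge (ht j)
        rw [div_le_iff₀ hc] at htj
        nlinarith
      rw [← hN₀] at h1
      linarith
    have hzero : A.mulVec (fun i => (v.2 i : ℝ)) + (fun i => (v.1 i : ℝ)) = 0 :=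
      norm_eq_zero.mp hN0
    apply hA
    have hσ' : (n:ℝ)/m + 1 > (n:ℝ)/m := by linarith
    refine ⟨(n:ℝ)/m + 1, hσ', ?_⟩
    obtain ⟨i₀, hi₀⟩ := Function.ne_iff.mp hq₀
    apply Set.infinite_of_injective_forall_mem
      (f := fun N : ℕ => (((N:ℤ)+1) • v.1, ((N:ℤ)+1) • v.2))
    · intro N₁ N₂ hN
      have h2 := congrArg (fun x => x.2 i₀) hN
      simp only [Pi.smul_apply, smul_eq_mul] at h2
      have hi₀' : v.2 i₀ ≠ 0 := by simpa using hi₀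
      have : (N₁:ℤ) + 1 = (N₂:ℤ) + 1 := mul_right_cancel₀ hi₀' h2
      exact_mod_cast (by omega : (N₁:ℤ) = N₂)
    · intro N
      rw [Set.mem_setOf_eq]
      have hcast2 : (fun i => ((((N:ℤ)+1) • v.2) i : ℝ)) = ((N:ℝ)+1) • (fun i => (v.2 i : ℝ)) := by
        funext i
        simp only [Pi.smul_apply, smul_eq_mul]
        push_cast
        ring
      have hcast1 : (fun i => ((((N:ℤ)+1) • v.1) i : ℝ)) = ((N:ℝ)+1) • (fun i => (v.1 i : ℝ)) := by
        funext i
        simp only [Pi.smul_apply, smul_eq_mul]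
        push_cast
        ring
      rw [hcast1, hcast2, Matrix.mulVec_smul, ← smul_add, hzero, smul_zero, norm_zero]
      apply le_of_lt
      apply Real.rpow_pos_of_pos
      rw [norm_smul]
      apply mul_pos
      · rw [Real.norm_eq_abs]
        have : (0:ℝ) < (N:ℝ) + 1 := by positivity
        rwa [abs_of_pos this]
      · rw [norm_pos_iff]
        intro hz
        have hval := congrFun hz i₀
        simp only [Pi.zero_apply] at hval
        have : v.2 i₀ = 0 := by exact_mod_cast hval
        simpa [this] using hi₀
  · -- infinitely many pairs
    have hinf : (Set.range (fun j => (p j, q j))).Infinite := hfin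
    set σ := (δ + 1/m) / (1/n - δ) with hσdef
    have hden : 0 < 1/n - δ := by linarith
    have hnum : 0 < δ + 1/m := by positivity
    have hσpos : 0 < σ := div_pos hnum hden
    have hσmul : (1/n - δ) * σ = δ + 1/m := by
      rw [hσdef, mul_comm, div_mul_cancel₀ _ (ne_of_gt hden)]
    have hσgt : σ > (n:ℝ)/m := by
      rw [hσdef, gt_iff_lt, lt_div_iff₀ hden]
      have hinv : (n:ℝ)/m * (1/n) = 1/m := by
        field_simp
      have hd : 0 < (n:ℝ)/m * δ := by positivity
      calc (n:ℝ)/m * (1/n - δ) = (n:ℝ)/m * (1/n) - (n:ℝ)/m * δ := by ring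
        _ = 1/m - (n:ℝ)/m * δ := by rw [hinv]
        _ < δ + 1/m := by linarith
    apply hA
    refine ⟨σ, hσgt, ?_⟩
    apply Set.Infinite.mono ?_ hinf
    rintro v ⟨j, rfl⟩
    rw [Set.mem_setOf_eq]
    have hq1j := hq1 j
    have hqpos : (0:ℝ) < ‖(fun i => (q j i : ℝ))‖ := lt_of_lt_of_le one_pos hq1j
    have hQ : Real.exp ((1/n - δ) * t j) ^ (-σ) ≤ ‖(fun i => (q j i : ℝ))‖ ^ (-σ) :=
      Real.rpow_le_rpow_of_nonpos hqpos (le_of_lt (hqlt j)) (by linarith)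
    have hexp : Real.exp ((1/n - δ) * t j) ^ (-σ) = Real.exp (-(δ + 1/m) * t j) := by
      rw [← Real.exp_mul]
      congr 1
      rw [show (1/n - δ) * t j * (-σ) = -((1/n - δ) * σ) * t j by ring, hσmul]
    rw [hexp] at hQ
    exact le_trans (le_of_lt (hmain j)) hQ



set_option maxHeartbeats 1000000 in
/-- If an `m × n` real matrix `A` is not very well approximable, then for
every `ε > 0` there exists `c > 0` such that for all sufficiently large `Q` and all
`γ ∈ ℝ^m`, there exist `q ∈ ℤ^n` with `‖q‖ < Q` and `p ∈ ℤ^m` satisfying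
`‖A q - p - γ‖ < c * Q ^ (-(n/m - ε))`. -/
theorem not_VWA_implies_inhomogeneous
    (m n : ℕ) (hm : 0 < m) (hn : 0 < n) (A : Matrix (Fin m) (Fin n) ℝ)
    (hA : ¬ ∃ σ : ℝ, σ > (n : ℝ) / m ∧
      {pq : (Fin m → ℤ) × (Fin n → ℤ) |
        ‖A.mulVec (fun i => (pq.2 i : ℝ)) + (fun i => (pq.1 i : ℝ))‖ ≤
          ‖(fun i => (pq.2 i : ℝ))‖ ^ (-σ)}.Infinite) :
    ∀ ε > (0 : ℝ), ∃ c > (0 : ℝ), ∃ Q₀ : ℝ, ∀ Q ≥ Q₀, ∀ γ : Fin m → ℝ,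
      ∃ q : Fin n → ℤ, ‖(fun i => (q i : ℝ))‖ < Q ∧
      ∃ p : Fin m → ℤ,
        ‖A.mulVec (fun i => (q i : ℝ)) - (fun i => (p i : ℝ)) - γ‖ <
          c * Q ^ (-((n : ℝ) / m - ε)) := by
  intro ε hε
  have hm' : (0:ℝ) < m := by exact_mod_cast hm
  have hn' : (0:ℝ) < n := by exact_mod_cast hn
  haveI : Nonempty (Fin m ⊕ Fin n) := ⟨Sum.inl ⟨0, hm⟩⟩
  set k : ℕ := m + n with hkdef
  have hk2 : 2 ≤ k := by omega
  set K : ℕ := k - 1 with hKdef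
  have hkK : k = K + 1 := by omega
  have hkR : (2:ℝ) ≤ (k:ℝ) := by exact_mod_cast hk2
  have hcardι : Fintype.card (Fin m ⊕ Fin n) = k := by simp [hkdef]
  -- choose δ
  obtain ⟨δ, hδcond, hδpos⟩ : ∃ δ : ℝ,
      (((n:ℝ)/m - ε < (1/m - δ*K) / (1/n + δ*K + δ)) ∧ δ < 1/n) ∧ 0 < δ := by
    have hcont : ContinuousAt (fun x : ℝ => (1/(m:ℝ) - x*K) / (1/n + x*K + x)) 0 := by
      apply ContinuousAt.div
      · fun_prop
      · fun_prop
      · simp only [zero_mul, add_zero, sub_zero]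
        positivity
    have h1 : (n:ℝ)/m - ε < (1/(m:ℝ) - 0*K) / (1/(n:ℝ) + 0*K + 0) := by
      have hval : (1/(m:ℝ)) / (1/(n:ℝ)) = (n:ℝ)/m := by
        rw [div_div_eq_mul_div, div_one, one_div_mul_eq_div]
      simp only [zero_mul, add_zero, sub_zero]
      rw [hval]
      linarith
    have hev1 : ∀ᶠ x in nhds (0:ℝ),
        (n:ℝ)/m - ε < (1/(m:ℝ) - x*K) / (1/n + x*K + x) :=
      hcont.eventually (eventually_gt_nhds h1)
    have hev2 : ∀ᶠ x in nhds (0:ℝ), x < 1/(n:ℝ) := eventually_lt_nhds (by positivity)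
    have hev := ((hev1.and hev2).filter_mono
      (nhdsWithin_le_nhds (s := Set.Ioi (0:ℝ)))).and eventually_mem_nhdsWithin
    obtain ⟨δ, hδ⟩ := hev.exists
    exact ⟨δ, hδ.1, hδ.2⟩
  obtain ⟨hgδ, hδn⟩ := hδcond
  set α : ℝ := δ * K with hαdef
  have hαpos : 0 ≤ α := by positivity
  set θ : ℝ := (1/n + α + δ)⁻¹ with hθdef
  have hden : (0:ℝ) < 1/n + α + δ := by positivity
  have hθpos : 0 < θ := by rw [hθdef]; positivity
  have hθ1 : θ * (1/n + α + δ) = 1 := inv_mul_cancel₀ (ne_of_gt hden)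
  have hexpo1 : θ * (α + 1/n) = 1 - δ*θ := by
    calc θ * (α + 1/n) = θ * (1/n + α + δ) - θ*δ := by ring
      _ = 1 - δ*θ := by rw [hθ1]; ring
  have hexpo2 : θ * (α - 1/m) ≤ -((n:ℝ)/m - ε) := by
    have hlt : (n:ℝ)/m - ε < (1/m - α) * θ := by
      rw [div_eq_mul_inv] at hgδ
      calc (n:ℝ)/m - ε < (1/m - δ*K) * (1/n + δ*K + δ)⁻¹ := hgδ
        _ = (1/m - α) * θ := by rw [hαdef, hθdef]
    have heq : θ*(α - 1/m) = -((1/m - α)*θ) := by ring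
    rw [heq]
    linarith
  -- uniform lower bound from non-VWA
  obtain ⟨t₀, ht₀0, hdani⟩ := dani_step m n hm hn A hA hδpos hδn
  set C₀ : ℝ := (k:ℝ) * ((k:ℝ)^K + 2) with hC₀def
  have hC₀pos : 0 < C₀ := by positivity
  refine ⟨C₀ + 1, by positivity, max (max (Real.exp ((max t₀ 0 + 1) / θ)) 2)
    ((C₀+1) ^ ((δ*θ)⁻¹ : ℝ)), ?_⟩
  intro Q hQ γ
  have hQ2 : (2:ℝ) ≤ Q := le_trans (le_trans (le_max_right _ _) (le_max_left _ _)) hQ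
  have hQ1 : (1:ℝ) < Q := by linarith
  have hQpos : (0:ℝ) < Q := by linarith
  set t : ℝ := θ * Real.log Q with htdef
  have hlogQ : 0 < Real.log Q := Real.log_pos hQ1
  have ht_pos : 0 ≤ t := by positivity
  have ht_t₀ : t₀ ≤ t := by
    have hQa : Real.exp ((max t₀ 0 + 1) / θ) ≤ Q :=
      le_trans (le_trans (le_max_left _ _) (le_max_left _ _)) hQ
    have hlog : (max t₀ 0 + 1) / θ ≤ Real.log Q := by
      have := Real.log_le_log (Real.exp_pos _) hQa
      rwa [Real.log_exp] at this
    have hmul : θ * ((max t₀ 0 + 1) / θ) ≤ θ * Real.log Q :=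
      mul_le_mul_of_nonneg_left hlog hθpos.le
    have hcan : θ * ((max t₀ 0 + 1) / θ) = max t₀ 0 + 1 := by field_simp
    rw [hcan] at hmul
    calc t₀ ≤ max t₀ 0 := le_max_left _ _
      _ ≤ max t₀ 0 + 1 := by linarith
      _ ≤ t := hmul
  have hδθpos : 0 < δ*θ := by positivity
  have hQδθ : C₀ < Q ^ (δ*θ) := by
    have hQb : (C₀+1) ^ ((δ*θ)⁻¹ : ℝ) ≤ Q := le_trans (le_max_right _ _) hQ
    have h1 : (((C₀+1) ^ ((δ*θ)⁻¹ : ℝ))) ^ (δ*θ) ≤ Q ^ (δ*θ) :=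
      Real.rpow_le_rpow (Real.rpow_nonneg (by positivity) _) hQb hδθpos.le
    have h2 : C₀ + 1 ≤ Q ^ (δ*θ) := by
      rwa [← Real.rpow_mul (by positivity : (0:ℝ) ≤ C₀+1),
        inv_mul_cancel₀ (ne_of_gt hδθpos), Real.rpow_one] at h1
    linarith
  have hQt : ∀ c : ℝ, Real.exp (c * t) = Q ^ (c * θ) := by
    intro c
    rw [Real.rpow_def_of_pos hQpos]
    congr 1
    rw [htdef]; ring
  -- the lattice
  set em : ℝ := Real.exp (t/m) with hemdef
  set en : ℝ := Real.exp (-(t/n)) with hendef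
  have hem : 0 < em := Real.exp_pos _
  have hen : 0 < en := Real.exp_pos _
  set M : Matrix (Fin m ⊕ Fin n) (Fin m ⊕ Fin n) ℝ :=
    Matrix.fromBlocks (em • (1 : Matrix (Fin m) (Fin m) ℝ)) (em • A)
      0 (en • (1 : Matrix (Fin n) (Fin n) ℝ)) with hMdef
  have hMdet : M.det = 1 := by
    rw [hMdef, Matrix.det_fromBlocks_zero₂₁, Matrix.det_smul, Matrix.det_smul,
      Matrix.det_one, Matrix.det_one, mul_one, mul_one, Fintype.card_fin, Fintype.card_fin,
      hemdef, hendef, ← Real.exp_nat_mul, ← Real.exp_nat_mul]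
    have e1 : (m:ℝ) * (t/m) = t := by field_simp
    have e2 : (n:ℝ) * (-(t/n)) = -t := by field_simp <;> ring
    rw [e1, e2, ← Real.exp_add, add_neg_cancel, Real.exp_zero]
  haveI : Invertible M := M.invertibleOfIsUnitDet (by rw [hMdet]; exact isUnit_one)
  set Tm := M.toLinearEquiv' ‹Invertible M› with hTmdef
  set b : Basis (Fin m ⊕ Fin n) ℝ ((Fin m ⊕ Fin n) → ℝ) :=
    (Pi.basisFun ℝ (Fin m ⊕ Fin n)).map Tm with hbdef
  have hbapp : ∀ i, b i = M.mulVec (Pi.single i 1) := by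
    intro i
    rw [hbdef, Basis.map_apply, Pi.basisFun_apply]
    rfl
  have hvol : volume (ZSpan.fundamentalDomain b) = 1 := by
    rw [ZSpan.volume_fundamentalDomain]
    have hMT : (Matrix.of ⇑b) = M.transpose := by
      ext i j
      rw [Matrix.of_apply, hbapp i, Matrix.transpose_apply]
      simp [Matrix.mulVec, dotProduct, Pi.single_apply, mul_ite, Finset.sum_ite_eq]
    rw [hMT, Matrix.det_transpose, hMdet]
    simp
  have hdecomp : ∀ v ∈ Submodule.span ℤ (Set.range ⇑b), ∃ cc : (Fin m ⊕ Fin n) → ℤ,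
      v = M.mulVec (fun i => (cc i : ℝ)) := by
    intro v hv
    obtain ⟨cc, hcc⟩ := (mem_span_range_iff_exists_fun ℤ).mp hv
    refine ⟨cc, ?_⟩
    rw [← hcc]
    calc ∑ i, cc i • b i
        = ∑ i, M.mulVecLin ((cc i : ℝ) • (Pi.single i 1 : (Fin m ⊕ Fin n) → ℝ)) := by
          refine Finset.sum_congr rfl fun i _ => ?_
          rw [hbapp i, LinearMap.map_smul, Matrix.mulVecLin_apply, Int.cast_smul_eq_zsmul]
      _ = M.mulVecLin (∑ i, (cc i : ℝ) • (Pi.single i 1 : (Fin m ⊕ Fin n) → ℝ)) :=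
          (map_sum _ _ _).symm
      _ = M.mulVec (fun i => (cc i : ℝ)) := by
          have hXc : (∑ i, (cc i : ℝ) • (Pi.single i 1 : (Fin m ⊕ Fin n) → ℝ))
              = fun i => (cc i : ℝ) := by
            funext j
            rw [Finset.sum_apply]
            simp only [Pi.smul_apply, Pi.single_apply, smul_eq_mul, mul_ite, mul_one, mul_zero]
            rw [Finset.sum_ite_eq Finset.univ j (fun i => (cc i : ℝ))]
            simp
          rw [hXc, Matrix.mulVecLin_apply]
  have hsplit : ∀ cc : (Fin m ⊕ Fin n) → ℤ, (fun i => (cc i : ℝ)) =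
      Sum.elim (fun i => (cc (Sum.inl i) : ℝ)) (fun i => (cc (Sum.inr i) : ℝ)) := by
    intro cc; funext i; cases i <;> rfl
  have hcompL : ∀ cc : (Fin m ⊕ Fin n) → ℤ, ∀ j : Fin m,
      M.mulVec (fun i => (cc i : ℝ)) (Sum.inl j) =
        em * (((cc (Sum.inl j)) : ℝ) + A.mulVec (fun i => (cc (Sum.inr i) : ℝ)) j) := by
    intro cc j
    rw [hsplit cc, hMdef, Matrix.fromBlocks_mulVec, Sum.elim_inl, Sum.elim_comp_inl,
      Sum.elim_comp_inr, Matrix.smul_mulVec, Matrix.smul_mulVec,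
      Matrix.one_mulVec]
    simp only [Pi.add_apply, Pi.smul_apply, smul_eq_mul]
    ring
  have hcompR : ∀ cc : (Fin m ⊕ Fin n) → ℤ, ∀ j : Fin n,
      M.mulVec (fun i => (cc i : ℝ)) (Sum.inr j) = en * ((cc (Sum.inr j)) : ℝ) := by
    intro cc j
    rw [hsplit cc, hMdef, Matrix.fromBlocks_mulVec, Sum.elim_inr, Sum.elim_comp_inl,
      Sum.elim_comp_inr, Matrix.zero_mulVec, zero_add, Matrix.smul_mulVec,
      Matrix.one_mulVec]
    simp only [Pi.smul_apply, smul_eq_mul]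
  set η : ℝ := Real.exp (-δ * t) with hηdef
  have hηpos : 0 < η := Real.exp_pos _
  have hη1 : η ≤ 1 := Real.exp_le_one_iff.mpr (by nlinarith)
  have hmin : ∀ v ∈ Submodule.span ℤ (Set.range ⇑b), v ≠ 0 → η ≤ ‖v‖ := by
    intro v hv hv0
    obtain ⟨cc, rfl⟩ := hdecomp v hv
    have hne : ¬((fun i => cc (Sum.inl i)) = (0 : Fin m → ℤ) ∧
        (fun i => cc (Sum.inr i)) = (0 : Fin n → ℤ)) := by
      rintro ⟨hp, hq⟩
      apply hv0
      have hcc0 : (fun i => (cc i : ℝ)) = 0 := by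
        funext i
        cases i with
        | inl j => have := congrFun hp j; simp only [Pi.zero_apply] at this; simp [this]
        | inr j => have := congrFun hq j; simp only [Pi.zero_apply] at this; simp [this]
      rw [hcc0, Matrix.mulVec_zero]
    by_contra hltc
    push_neg at hltc
    refine hdani t ht_t₀ (fun i => cc (Sum.inl i)) (fun i => cc (Sum.inr i)) hne ⟨?_, ?_⟩
    · rw [pi_norm_lt_iff (by positivity)]
      intro j
      have hcj : |M.mulVec (fun i => (cc i : ℝ)) (Sum.inl j)| ≤
          ‖M.mulVec (fun i => (cc i : ℝ))‖ := by
        have := norm_le_pi_norm (M.mulVec fun i => (cc i : ℝ)) (Sum.inl j)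
        rwa [Real.norm_eq_abs] at this
      rw [hcompL cc j, abs_mul, abs_of_pos hem] at hcj
      have hXlt : em * |((cc (Sum.inl j)) : ℝ) +
          A.mulVec (fun i => (cc (Sum.inr i) : ℝ)) j| < η := lt_of_le_of_lt hcj hltc
      have h2 : |((cc (Sum.inl j)) : ℝ) + A.mulVec (fun i => (cc (Sum.inr i) : ℝ)) j| <
          η / em := by
        rw [lt_div_iff₀ hem]
        calc _ = em * |((cc (Sum.inl j)) : ℝ) +
              A.mulVec (fun i => (cc (Sum.inr i) : ℝ)) j| := mul_comm _ _
          _ < η := hXlt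
      have hdiv : η / em = Real.exp (-δ * t) * Real.exp (-(t/m)) := by
        rw [hηdef, hemdef, div_eq_mul_inv, ← Real.exp_neg]
      rw [hdiv] at h2
      simp only [Pi.add_apply, Real.norm_eq_abs]
      calc |A.mulVec (fun i => (cc (Sum.inr i) : ℝ)) j + ((cc (Sum.inl j)) : ℝ)|
          = |((cc (Sum.inl j)) : ℝ) + A.mulVec (fun i => (cc (Sum.inr i) : ℝ)) j| := by
            rw [add_comm]
        _ < Real.exp (-δ * t) * Real.exp (-(t/m)) := h2
    · rw [pi_norm_lt_iff (by positivity)]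
      intro j
      have hcj : |M.mulVec (fun i => (cc i : ℝ)) (Sum.inr j)| ≤
          ‖M.mulVec (fun i => (cc i : ℝ))‖ := by
        have := norm_le_pi_norm (M.mulVec fun i => (cc i : ℝ)) (Sum.inr j)
        rwa [Real.norm_eq_abs] at this
      rw [hcompR cc j, abs_mul, abs_of_pos hen] at hcj
      have hXlt : en * |((cc (Sum.inr j)) : ℝ)| < η := lt_of_le_of_lt hcj hltc
      have h2 : |((cc (Sum.inr j)) : ℝ)| < η / en := by
        rw [lt_div_iff₀ hen]
        calc _ = en * |((cc (Sum.inr j)) : ℝ)| := mul_comm _ _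
          _ < η := hXlt
      have hdiv : η / en = Real.exp (-δ * t) * Real.exp (t/n) := by
        rw [hηdef, hendef, div_eq_mul_inv, ← Real.exp_neg, neg_neg]
      rw [hdiv] at h2
      simpa [Real.norm_eq_abs] using h2
  -- apply the covering result
  obtain ⟨v, hvmem, hvnorm⟩ := lattice_covering b hvol hηpos hmin
    (Sum.elim (fun j => em * γ j) (0 : Fin n → ℝ))
  rw [hcardι, ← hKdef] at hvnorm
  have hρ : (k:ℝ) * (((k:ℝ)/η)^K + 1 + η) ≤ C₀ * Real.exp (α * t) := by
    have hexpα : 1 ≤ Real.exp (α * t) := Real.one_le_exp (by positivity)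
    have hinv : (k:ℝ)/η = (k:ℝ) * Real.exp (δ * t) := by
      rw [div_eq_iff (ne_of_gt hηpos), mul_assoc, hηdef, ← Real.exp_add,
        show δ*t + -δ*t = 0 by ring, Real.exp_zero, mul_one]
    have h1 : ((k:ℝ)/η)^K = (k:ℝ)^K * Real.exp (α * t) := by
      rw [hinv, mul_pow, ← Real.exp_nat_mul]
      congr 2
      rw [hαdef]; push_cast; ring
    rw [h1]
    have hkpos : (0:ℝ) < (k:ℝ) := by linarith
    have hkK0 : (0:ℝ) < (k:ℝ)^K := by positivity
    calc (k:ℝ) * ((k:ℝ)^K * Real.exp (α*t) + 1 + η)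
        ≤ (k:ℝ) * (((k:ℝ)^K + 2) * Real.exp (α*t)) := by
          apply mul_le_mul_of_nonneg_left ?_ hkpos.le
          nlinarith
      _ = C₀ * Real.exp (α*t) := by rw [hC₀def]; ring
  have hvbound : ‖Sum.elim (fun j => em * γ j) (0 : Fin n → ℝ) - v‖ ≤
      C₀ * Real.exp (α * t) := le_trans hvnorm hρ
  obtain ⟨cc, hvcc⟩ := hdecomp v hvmem
  refine ⟨fun i => cc (Sum.inr i), ?_, fun i => -(cc (Sum.inl i)), ?_⟩
  · -- norm of q bound
    have hcomp : ∀ j : Fin n, |((cc (Sum.inr j)) : ℝ)| ≤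
        C₀ * Real.exp (α * t) * Real.exp (t/n) := by
      intro j
      have h1 : |(Sum.elim (fun j => em * γ j) (0 : Fin n → ℝ) - v) (Sum.inr j)| ≤
          C₀ * Real.exp (α * t) := by
        have := norm_le_pi_norm (Sum.elim (fun j => em * γ j) (0 : Fin n → ℝ) - v)
          (Sum.inr j)
        rw [Real.norm_eq_abs] at this
        exact le_trans this hvbound
      rw [Pi.sub_apply, Sum.elim_inr, Pi.zero_apply, hvcc, hcompR cc j, zero_sub, abs_neg,
        abs_mul, abs_of_pos hen] at h1
      have h2 : |((cc (Sum.inr j)) : ℝ)| ≤ (C₀ * Real.exp (α * t)) / en := by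
        rw [le_div_iff₀ hen]
        calc _ = en * |((cc (Sum.inr j)) : ℝ)| := mul_comm _ _
          _ ≤ _ := h1
      rwa [hendef, div_eq_mul_inv, ← Real.exp_neg, neg_neg] at h2
    have hnorm : ‖(fun i => ((cc (Sum.inr i)) : ℝ))‖ ≤
        C₀ * Real.exp (α * t) * Real.exp (t/n) := by
      refine (pi_norm_le_iff_of_nonneg (by positivity)).mpr fun j => ?_
      rw [Real.norm_eq_abs]
      exact hcomp j
    have hmerge : C₀ * Real.exp (α * t) * Real.exp (t/n) = C₀ * Q ^ ((α + 1/n) * θ) := by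
      rw [mul_assoc, ← Real.exp_add, show α*t + t/n = (α + 1/n)*t by ring, hQt]
    calc ‖(fun i => ((cc (Sum.inr i)) : ℝ))‖ ≤ C₀ * Q ^ ((α + 1/n) * θ) := by
          rw [← hmerge]; exact hnorm
      _ = C₀ * Q ^ (1 - δ*θ) := by rw [mul_comm (α + 1/n) θ, hexpo1]
      _ < Q ^ (δ*θ) * Q ^ (1 - δ*θ) :=
          mul_lt_mul_of_pos_right hQδθ (Real.rpow_pos_of_pos hQpos _)
      _ = Q := by
          rw [← Real.rpow_add hQpos, show δ*θ + (1 - δ*θ) = (1:ℝ) by ring, Real.rpow_one]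
  · -- error bound
    have hcomp : ∀ j : Fin m,
        |A.mulVec (fun i => ((cc (Sum.inr i)) : ℝ)) j + ((cc (Sum.inl j)) : ℝ) - γ j| ≤
          C₀ * Real.exp (α * t) * Real.exp (-(t/m)) := by
      intro j
      have h1 : |(Sum.elim (fun j => em * γ j) (0 : Fin n → ℝ) - v) (Sum.inl j)| ≤
          C₀ * Real.exp (α * t) := by
        have := norm_le_pi_norm (Sum.elim (fun j => em * γ j) (0 : Fin n → ℝ) - v)
          (Sum.inl j)
        rw [Real.norm_eq_abs] at this
        exact le_trans this hvbound
      rw [Pi.sub_apply, Sum.elim_inl, hvcc, hcompL cc j] at h1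
      have heq : em * γ j - em * (((cc (Sum.inl j)) : ℝ) +
          A.mulVec (fun i => ((cc (Sum.inr i)) : ℝ)) j) =
          em * -(A.mulVec (fun i => ((cc (Sum.inr i)) : ℝ)) j + ((cc (Sum.inl j)) : ℝ) - γ j) := by
        ring
      rw [heq, abs_mul, abs_of_pos hem, abs_neg] at h1
      have h2 : |A.mulVec (fun i => ((cc (Sum.inr i)) : ℝ)) j + ((cc (Sum.inl j)) : ℝ) - γ j| ≤
          (C₀ * Real.exp (α * t)) / em := by
        rw [le_div_iff₀ hem]
        calc _ = em * |A.mulVec (fun i => ((cc (Sum.inr i)) : ℝ)) j +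
              ((cc (Sum.inl j)) : ℝ) - γ j| := mul_comm _ _
          _ ≤ _ := h1
      rwa [hemdef, div_eq_mul_inv, ← Real.exp_neg] at h2
    have hgoalvec : (A.mulVec (fun i => ((cc (Sum.inr i)) : ℝ)) -
        (fun i => ((-(cc (Sum.inl i)) : ℤ) : ℝ)) - γ) =
        fun j => A.mulVec (fun i => ((cc (Sum.inr i)) : ℝ)) j + ((cc (Sum.inl j)) : ℝ) - γ j := by
      funext j
      simp only [Pi.sub_apply]
      push_cast
      ring
    have hnorm : ‖A.mulVec (fun i => ((cc (Sum.inr i)) : ℝ)) -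
        (fun i => ((-(cc (Sum.inl i)) : ℤ) : ℝ)) - γ‖ ≤
        C₀ * Real.exp (α * t) * Real.exp (-(t/m)) := by
      rw [hgoalvec]
      refine (pi_norm_le_iff_of_nonneg (by positivity)).mpr fun j => ?_
      rw [Real.norm_eq_abs]
      exact hcomp j
    have hmerge : C₀ * Real.exp (α * t) * Real.exp (-(t/m)) = C₀ * Q ^ ((α - 1/m) * θ) := by
      rw [mul_assoc, ← Real.exp_add, show α*t + -(t/m) = (α - 1/m)*t by ring, hQt]
    calc ‖A.mulVec (fun i => ((cc (Sum.inr i)) : ℝ)) -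
        (fun i => ((-(cc (Sum.inl i)) : ℤ) : ℝ)) - γ‖
        ≤ C₀ * Q ^ ((α - 1/m) * θ) := by rw [← hmerge]; exact hnorm
      _ ≤ C₀ * Q ^ (-((n:ℝ)/m - ε)) := by
          apply mul_le_mul_of_nonneg_left ?_ hC₀pos.le
          apply Real.rpow_le_rpow_of_exponent_le hQ1.le
          rw [mul_comm]
          exact hexpo2
      _ < (C₀ + 1) * Q ^ (-((n:ℝ)/m - ε)) :=
          mul_lt_mul_of_pos_right (by linarith) (Real.rpow_pos_of_pos hQpos _)
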